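/- Let r ≥ 2 and k ≥ 1, and let N = (rk+1)(r−1) and m = (r−1)k. Then there exists a map f : σ^N → ℝ^{rk} that is the restriction of an affine map such that all r-Tverberg points of f are of type {m}^r in the following sense: whenever x_1,…,x_r ∈ σ^N have pairwise disjoint supports and f(x_1) = … = f(x_r), each support supp(x_i) has cardinality exactly m + 1 = (r−1)k + 1. -/

import Mathlib

open Set

open Finset

noncomputable def st8val (p k : ℕ) (g : Fin ((p+1)*k+1)) (s : Fin (p+2))
    (c : Fin ((p+2)*k)) : ℝ :=
  if (c : ℕ) < (p+1)*k then (if (g : ℕ) = (c : ℕ) + 1 then 1 else 0)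
  else if (g : ℕ) = 0 then (s : ℝ)
  else if ((g : ℕ) - 1) / (p+1) = (c : ℕ) - (p+1)*k ∧ (s : ℕ) = 0 then 1 else 0

lemma st8_comp_mass (p k : ℕ) (z : Fin ((p+1)*k+1) × Fin (p+2) → ℝ)
    (g'' : Fin ((p+1)*k)) (c : Fin ((p+2)*k)) (hc : (c : ℕ) = (g'' : ℕ)) :
    ∑ gs : Fin ((p+1)*k+1) × Fin (p+2), z gs * st8val p k gs.1 gs.2 c
      = ∑ s, z (g''.succ, s) := by
  have hlt : (c : ℕ) < (p+1)*k := by rw [hc]; exact g''.2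
  rw [Fintype.sum_prod_type]
  have h1 : ∀ g : Fin ((p+1)*k+1),
      (∑ s, z (g, s) * st8val p k g s c) = if g = g''.succ then ∑ s, z (g, s) else 0 := by
    intro g
    by_cases hg : g = g''.succ
    · subst hg
      rw [if_pos rfl]
      refine Finset.sum_congr rfl fun s _ => ?_
      simp [st8val, hlt, hc]
    · rw [if_neg hg]
      refine Finset.sum_eq_zero fun s _ => ?_
      have hval : ¬ ((g : ℕ) = (c : ℕ) + 1) := by
        intro h; apply hg; apply Fin.ext; rw [h, hc, Fin.val_succ]
      simp [st8val, hlt, hval]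
  rw [Finset.sum_congr rfl fun g _ => h1 g, Finset.sum_ite_eq' Finset.univ g''.succ]
  simp

lemma st8_comp_color (p k : ℕ) (z : Fin ((p+1)*k+1) × Fin (p+2) → ℝ)
    (j : Fin k) (c : Fin ((p+2)*k)) (hc : (c : ℕ) = (p+1)*k + (j : ℕ)) :
    ∑ gs : Fin ((p+1)*k+1) × Fin (p+2), z gs * st8val p k gs.1 gs.2 c
      = (∑ s, z (0, s) * (s : ℝ))
        + ∑ g'' : Fin ((p+1)*k),
            (if (g'' : ℕ) / (p+1) = (j : ℕ) then z (g''.succ, (0 : Fin (p+2))) else 0) := by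
  have hnl : ¬ ((c : ℕ) < (p+1)*k) := by omega
  have hcm : (c : ℕ) - (p+1)*k = (j : ℕ) := by omega
  rw [Fintype.sum_prod_type, Fin.sum_univ_succ]
  congr 1
  · refine Finset.sum_congr rfl fun s _ => ?_
    simp [st8val, hnl]
  · refine Finset.sum_congr rfl fun g'' _ => ?_
    have hsv : ∀ s : Fin (p+2), st8val p k g''.succ s c
        = if (g'' : ℕ) / (p+1) = (j : ℕ) ∧ (s : ℕ) = 0 then 1 else 0 := by
      intro s
      simp only [st8val, if_neg hnl, Fin.val_succ, Nat.add_sub_cancel, hcm,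
        Nat.succ_ne_zero, if_neg (Nat.succ_ne_zero (g'' : ℕ)), if_false]
    by_cases hcol : (g'' : ℕ) / (p+1) = (j : ℕ)
    · rw [if_pos hcol, Fin.sum_univ_succ]
      have h0 : st8val p k g''.succ (0 : Fin (p+2)) c = 1 := by
        rw [hsv]; simp [hcol]
      rw [h0, mul_one]
      have hrest : ∀ s : Fin (p+1), z (g''.succ, s.succ) * st8val p k g''.succ s.succ c = 0 := by
        intro s
        rw [hsv]
        simp [Fin.val_succ]
      rw [Finset.sum_congr rfl fun s _ => hrest s]
      simp
    · rw [if_neg hcol]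
      refine Finset.sum_eq_zero fun s _ => ?_
      rw [hsv]
      simp [hcol]

lemma st8_key (p k : ℕ) (hk : 1 ≤ k)
    (y : Fin (p+2) → (Fin ((p+1)*k+1) × Fin (p+2)) → ℝ)
    (hnn : ∀ i gs, 0 ≤ y i gs)
    (hsum : ∀ i, ∑ gs, y i gs = 1)
    (hdisj : Pairwise fun i j => Disjoint {gs | 0 < y i gs} {gs | 0 < y j gs})
    (heq : ∀ (i i' : Fin (p+2)) (c : Fin ((p+2)*k)),
      (∑ gs, y i gs * st8val p k gs.1 gs.2 c) = ∑ gs, y i' gs * st8val p k gs.1 gs.2 c) :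
    ∀ i, {gs | 0 < y i gs}.ncard = (p+1)*k + 1 := by
  classical
  -- group masses
  set W : Fin (p+2) → Fin ((p+1)*k+1) → ℝ := fun i g => ∑ s, y i (g, s) with hW
  have hWnn : ∀ i g, 0 ≤ W i g := fun i g => Finset.sum_nonneg fun s _ => hnn i (g, s)
  have hmass_succ : ∀ (i i' : Fin (p+2)) (g'' : Fin ((p+1)*k)),
      W i g''.succ = W i' g''.succ := by
    intro i i' g''
    have hlt : (g'' : ℕ) < (p+2)*k :=
      lt_of_lt_of_le g''.2 (Nat.mul_le_mul_right k (by omega))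
    have h := heq i i' ⟨(g'' : ℕ), hlt⟩
    rwa [st8_comp_mass p k _ g'' _ rfl, st8_comp_mass p k _ g'' _ rfl] at h
  have hmass : ∀ (i i' : Fin (p+2)) g, W i g = W i' g := by
    intro i i' g
    rcases Fin.eq_zero_or_eq_succ g with h | ⟨g'', rfl⟩
    · subst h
      have h1 : ∀ i'' : Fin (p+2),
          W i'' 0 + ∑ g'' : Fin ((p+1)*k), W i'' g''.succ = 1 := by
        intro i''
        rw [← hsum i'', Fintype.sum_prod_type, Fin.sum_univ_succ]
      have h2 : ∑ g'' : Fin ((p+1)*k), W i g''.succ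
          = ∑ g'' : Fin ((p+1)*k), W i' g''.succ :=
        Finset.sum_congr rfl fun g'' _ => hmass_succ i i' g''
      have e1 := h1 i; have e2 := h1 i'
      rw [h2] at e1; linarith
    · exact hmass_succ i i' g''
  -- active groups
  set G : Finset (Fin ((p+1)*k+1)) := Finset.univ.filter (fun g => 0 < W 0 g) with hG
  have hGmem : ∀ g (i : Fin (p+2)), g ∈ G ↔ 0 < W i g := by
    intro g i
    rw [hG]
    simp only [Finset.mem_filter, Finset.mem_univ, true_and]
    rw [hmass 0 i]
  have hyG : ∀ i g s, 0 < y i (g, s) → g ∈ G := by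
    intro i g s h
    rw [hGmem g i]
    exact lt_of_lt_of_le h (Finset.single_le_sum (fun s' _ => hnn i (g, s')) (Finset.mem_univ s))
  have hnotG : ∀ i g s, g ∉ G → y i (g, s) = 0 := by
    intro i g s h
    by_contra hne
    exact h (hyG i g s (lt_of_le_of_ne (hnn i (g, s)) (Ne.symm hne)))
  -- unique slot per active group
  have hslot : ∀ g, g ∈ G → ∃ σ : Fin (p+2) → Fin (p+2), Function.Injective σ ∧
      (∀ i, y i (g, σ i) = W i g) ∧ (∀ i s, s ≠ σ i → y i (g, s) = 0) := by
    intro g hg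
    set S : Fin (p+2) → Finset (Fin (p+2)) :=
      fun i => Finset.univ.filter (fun s => 0 < y i (g, s)) with hS
    have hSmem : ∀ i s, s ∈ S i ↔ 0 < y i (g, s) := by
      intro i s; rw [hS]; simp
    have hSne : ∀ i, (S i).Nonempty := by
      intro i
      have h0 : 0 < W i g := (hGmem g i).1 hg
      by_contra hemp
      rw [Finset.not_nonempty_iff_eq_empty] at hemp
      have hz : W i g = 0 := by
        refine Finset.sum_eq_zero fun s _ => ?_
        have hs : s ∉ S i := by rw [hemp]; exact Finset.notMem_empty s
        rw [hSmem] at hs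
        linarith [hnn i (g, s)]
      linarith
    have hSdisj : ∀ (i i' : Fin (p+2)), i ≠ i' → Disjoint (S i) (S i') := by
      intro i i' hne
      rw [Finset.disjoint_left]
      intro s hsi hsi'
      rw [hSmem] at hsi hsi'
      exact Set.disjoint_left.mp (hdisj hne) hsi hsi'
    have hcard1 : ∀ i, (S i).card = 1 := by
      have htot : ∑ i, (S i).card ≤ p + 2 := by
        rw [← Finset.card_biUnion (fun i _ i' _ hne => hSdisj i i' hne)]
        calc (Finset.univ.biUnion S).card
            ≤ (Finset.univ : Finset (Fin (p+2))).card :=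
              Finset.card_le_card (Finset.subset_univ _)
          _ = p + 2 := by simp
      intro i
      by_contra hne1
      have hge : ∀ i', 1 ≤ (S i').card := fun i' => Finset.Nonempty.card_pos (hSne i')
      have hlt : (∑ _i' : Fin (p+2), 1) < ∑ i', (S i').card :=
        Finset.sum_lt_sum (fun i' _ => hge i')
          ⟨i, Finset.mem_univ i, by have := hge i; omega⟩
      simp only [Finset.sum_const, Finset.card_univ, Fintype.card_fin, smul_eq_mul,
        mul_one] at hlt
      omega
    choose s1 hs1 using fun i => Finset.card_eq_one.mp (hcard1 i)
    have hs1mem : ∀ i, s1 i ∈ S i := fun i => by rw [hs1 i]; exact Finset.mem_singleton_self _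
    refine ⟨s1, ?_, ?_, ?_⟩
    · intro i i' h
      by_contra hne
      have hd := hSdisj i i' hne
      rw [Finset.disjoint_left] at hd
      exact hd (hs1mem i) (h ▸ hs1mem i')
    · intro i
      have hz : ∀ s ∈ Finset.univ, s ≠ s1 i → y i (g, s) = 0 := by
        intro s _ hne
        have hs : s ∉ S i := by rw [hs1 i]; simp [hne]
        rw [hSmem] at hs
        linarith [hnn i (g, s)]
      have := Finset.sum_eq_single (s1 i) hz (fun h => absurd (Finset.mem_univ _) h)
      rw [hW]
      simp only []
      rw [this]
    · intro i s hne
      have hs : s ∉ S i := by rw [hs1 i]; simp [hne]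
      rw [hSmem] at hs
      linarith [hnn i (g, s)]
  -- class cardinality bound
  have hclass_card : ∀ j : ℕ,
      (Finset.univ.filter (fun g'' : Fin ((p+1)*k) => (g'' : ℕ) / (p+1) = j)).card ≤ p+1 := by
    intro j
    have hle : (Finset.univ.filter (fun g'' : Fin ((p+1)*k) => (g'' : ℕ) / (p+1) = j)).card
        ≤ (Finset.univ : Finset (Fin (p+1))).card := by
      refine Finset.card_le_card_of_injOn
        (fun g'' => (⟨(g'' : ℕ) % (p+1), Nat.mod_lt _ (by omega)⟩ : Fin (p+1)))
        (fun g'' _ => Finset.mem_univ _) ?_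
      intro a ha b hb hab
      rw [Finset.mem_coe, Finset.mem_filter] at ha hb
      have e1 := Nat.div_add_mod (a : ℕ) (p+1)
      have e2 := Nat.div_add_mod (b : ℕ) (p+1)
      have hmod : (a : ℕ) % (p+1) = (b : ℕ) % (p+1) := by
        simpa [Fin.ext_iff] using hab
      apply Fin.ext
      rw [← e1, ← e2, ha.2, hb.2, hmod]
    simpa using hle
  -- color equations
  have hcj : ∀ j : Fin k, (p+1)*k + (j : ℕ) < (p+2)*k := by
    intro j
    have h1 : (p+2)*k = (p+1)*k + k := by ring
    have := j.2
    omega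
  set A : Fin (p+2) → ℝ := fun i => ∑ s, y i (0, s) * (s : ℝ) with hA
  set B : Fin (p+2) → Fin k → ℝ := fun i j => ∑ g'' : Fin ((p+1)*k),
      (if (g'' : ℕ) / (p+1) = (j : ℕ) then y i (g''.succ, (0 : Fin (p+2))) else 0) with hB
  have hBnn : ∀ i j, 0 ≤ B i j := by
    intro i j
    refine Finset.sum_nonneg fun g'' _ => ?_
    by_cases hcol : (g'' : ℕ) / (p+1) = (j : ℕ)
    · rw [if_pos hcol]; exact hnn i _
    · rw [if_neg hcol]
  have hAB : ∀ i i' j, A i + B i j = A i' + B i' j := by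
    intro i i' j
    have h := heq i i' ⟨(p+1)*k + (j : ℕ), hcj j⟩
    rwa [st8_comp_color p k _ j _ rfl, st8_comp_color p k _ j _ rfl] at h
  have hMpos : 0 < (p+1)*k := Nat.mul_pos (Nat.succ_pos p) hk
  have g0 : Fin ((p+1)*k) := ⟨0, hMpos⟩
  -- the main cardinality bound
  have hGcard : (p+1)*k + 1 ≤ G.card := by
    by_cases h0 : (0 : Fin ((p+1)*k+1)) ∈ G
    · -- group 0 is active
      obtain ⟨σ, hσinj, hσW, hσ0⟩ := hslot 0 h0
      have hW00 : 0 < W 0 0 := (hGmem _ 0).1 h0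
      have hA_eq : ∀ i, A i = W 0 0 * ((σ i : ℕ) : ℝ) := by
        intro i
        have hz : ∀ s ∈ Finset.univ, s ≠ σ i → y i (0, s) * (s : ℝ) = 0 := by
          intro s _ hne
          rw [hσ0 i s hne, zero_mul]
        have h1 := Finset.sum_eq_single (σ i) hz (fun h => absurd (Finset.mem_univ _) h)
        simp only [hA]
        rw [h1, hσW i, hmass i 0 0]
      have hAinj : ∀ i i', A i = A i' → i = i' := by
        intro i i' h
        rw [hA_eq i, hA_eq i'] at h
        have h2 := mul_left_cancel₀ (ne_of_gt hW00) h
        exact hσinj (Fin.ext (Nat.cast_injective h2))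
      set Q := Finset.univ.filter (fun g'' : Fin ((p+1)*k) => g''.succ ∈ G) with hQ
      have hfibf : ∀ g'' : Fin ((p+1)*k), (g'' : ℕ)/(p+1) < k :=
        fun g'' => Nat.div_lt_of_lt_mul g''.2
      have h1 : Q.card + 1 ≤ G.card := by
        have hnot : (0 : Fin ((p+1)*k+1)) ∉ Q.image Fin.succ := by
          intro hmem
          obtain ⟨g'', _, habs⟩ := Finset.mem_image.mp hmem
          exact Fin.succ_ne_zero g'' habs
        have hsub : insert (0 : Fin ((p+1)*k+1)) (Q.image Fin.succ) ⊆ G := by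
          intro g hgm
          rcases Finset.mem_insert.mp hgm with h | h
          · rw [h]; exact h0
          · obtain ⟨g'', hg'', rfl⟩ := Finset.mem_image.mp h
            exact (Finset.mem_filter.mp hg'').2
        calc Q.card + 1
            = (insert (0 : Fin ((p+1)*k+1)) (Q.image Fin.succ)).card := by
              rw [Finset.card_insert_of_notMem hnot,
                Finset.card_image_of_injective _ (Fin.succ_injective _)]
          _ ≤ G.card := Finset.card_le_card hsub
      have h2 : Q.card = ∑ j : Fin k,
          (Q.filter (fun g'' : Fin ((p+1)*k) => (g'' : ℕ)/(p+1) = (j : ℕ))).card := by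
        have hfw := Finset.card_eq_sum_card_fiberwise
          (f := fun g'' : Fin ((p+1)*k) => (⟨(g'' : ℕ)/(p+1), hfibf g''⟩ : Fin k))
          (s := Q) (t := Finset.univ) (fun g'' _ => Finset.mem_univ _)
        rw [hfw]
        refine Finset.sum_congr rfl fun j _ => ?_
        congr 1
        refine Finset.filter_congr fun g'' _ => ?_
        simp [Fin.ext_iff]
      have h3 : ∀ j : Fin k, p + 1 ≤
          (Q.filter (fun g'' : Fin ((p+1)*k) => (g'' : ℕ)/(p+1) = (j : ℕ))).card := by
        intro j
        set H := Finset.univ.filter (fun i : Fin (p+2) =>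
          ∃ g'' : Fin ((p+1)*k), (g'' : ℕ)/(p+1) = (j : ℕ)
            ∧ 0 < y i (g''.succ, (0 : Fin (p+2)))) with hH
        have hHmem : ∀ i, i ∈ H ↔ ∃ g'' : Fin ((p+1)*k), (g'' : ℕ)/(p+1) = (j : ℕ)
            ∧ 0 < y i (g''.succ, (0 : Fin (p+2))) := by
          intro i; rw [hH]; simp
        have hHcard : H.card ≤ (Q.filter (fun g'' : Fin ((p+1)*k) => (g'' : ℕ)/(p+1) = (j : ℕ))).card := by
          have hw : ∀ i ∈ H, ∃ g'' : Fin ((p+1)*k), (g'' : ℕ)/(p+1) = (j : ℕ)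
              ∧ 0 < y i (g''.succ, (0 : Fin (p+2))) := fun i hi => (hHmem i).1 hi
          choose w hw1 hw2 using hw
          refine Finset.card_le_card_of_injOn
            (fun i => if hi : i ∈ H then w i hi else g0) ?_ ?_
          · intro i hi
            rw [Finset.mem_coe] at hi
            simp only [dif_pos hi]
            exact Finset.mem_filter.mpr ⟨Finset.mem_filter.mpr
              ⟨Finset.mem_univ _, hyG _ _ _ (hw2 i hi)⟩, hw1 i hi⟩
          · intro a ha b hb hab
            rw [Finset.mem_coe] at ha hb
            simp only [dif_pos ha, dif_pos hb] at hab
            by_contra hne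
            have hpa := hw2 a ha
            have hpb := hw2 b hb
            rw [hab] at hpa
            exact Set.disjoint_left.mp (hdisj hne) hpa hpb
        have hBzero : ∀ a, a ∉ H → B a j = 0 := by
          intro a ha
          simp only [hB]
          refine Finset.sum_eq_zero fun g'' _ => ?_
          by_cases hcol : (g'' : ℕ)/(p+1) = (j : ℕ)
          · rw [if_pos hcol]
            by_contra hne
            have hpos : 0 < y a (g''.succ, (0 : Fin (p+2))) :=
              lt_of_le_of_ne (hnn _ _) (Ne.symm hne)
            exact ha ((hHmem a).2 ⟨g'', hcol, hpos⟩)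
          · rw [if_neg hcol]
        have hcompl : ∀ a ∈ Finset.univ \ H, ∀ b ∈ Finset.univ \ H, a = b := by
          intro a ha b hb
          rw [Finset.mem_sdiff] at ha hb
          have hab := hAB a b j
          rw [hBzero a ha.2, hBzero b hb.2] at hab
          exact hAinj a b (by linarith)
        have hc1 : (Finset.univ \ H).card ≤ 1 := Finset.card_le_one.mpr hcompl
        have hsd : (Finset.univ \ H).card = (p+2) - H.card := by
          rw [Finset.card_sdiff_of_subset (Finset.subset_univ H)]
          simp
        have hle2 : H.card ≤ p + 2 := by
          calc H.card ≤ (Finset.univ : Finset (Fin (p+2))).card :=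
                Finset.card_le_card (Finset.subset_univ _)
            _ = p + 2 := by simp
        omega
      have h4 : k * (p+1) ≤ Q.card := by
        rw [h2]
        calc k * (p+1) = ∑ _j : Fin k, (p+1) := by
              simp [Finset.sum_const, Finset.card_univ]
          _ ≤ ∑ j : Fin k, (Q.filter (fun g'' : Fin ((p+1)*k) => (g'' : ℕ)/(p+1) = (j : ℕ))).card :=
              Finset.sum_le_sum fun j _ => h3 j
      have h5 : (p+1) * k = k * (p+1) := mul_comm _ _
      omega
    · -- group 0 inactive: contradiction
      exfalso
      have hGne : G.Nonempty := by
        by_contra hne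
        rw [Finset.not_nonempty_iff_eq_empty] at hne
        have h1 : (1 : ℝ) = 0 := by
          rw [← hsum 0]
          refine Finset.sum_eq_zero fun gs _ => ?_
          exact hnotG 0 gs.1 gs.2 (by rw [hne]; exact Finset.notMem_empty _)
        norm_num at h1
      obtain ⟨gstar, hgstar⟩ := hGne
      have hgne0 : gstar ≠ 0 := fun h => h0 (h ▸ hgstar)
      obtain ⟨g0'', rfl⟩ := Fin.eq_succ_of_ne_zero hgne0
      have hjlt : (g0'' : ℕ)/(p+1) < k := Nat.div_lt_of_lt_mul g0''.2
      have hA0 : ∀ i, A i = 0 := by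
        intro i
        simp only [hA]
        refine Finset.sum_eq_zero fun s _ => ?_
        rw [hnotG i 0 s h0, zero_mul]
      obtain ⟨σ, hσinj, hσW, hσ0⟩ := hslot _ hgstar
      obtain ⟨istar, hist⟩ := Finite.injective_iff_surjective.mp hσinj (0 : Fin (p+2))
      have hpos : 0 < y istar (g0''.succ, (0 : Fin (p+2))) := by
        rw [← hist, hσW istar]
        exact (hGmem _ istar).1 hgstar
      set H := Finset.univ.filter (fun i : Fin (p+2) =>
        ∃ g'' : Fin ((p+1)*k), (g'' : ℕ)/(p+1) = (g0'' : ℕ)/(p+1)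
          ∧ 0 < y i (g''.succ, (0 : Fin (p+2)))) with hH
      have hHmem : ∀ i, i ∈ H ↔ ∃ g'' : Fin ((p+1)*k),
          (g'' : ℕ)/(p+1) = (g0'' : ℕ)/(p+1)
          ∧ 0 < y i (g''.succ, (0 : Fin (p+2))) := by
        intro i; rw [hH]; simp
      have histar : istar ∈ H := (hHmem istar).2 ⟨g0'', rfl, hpos⟩
      have hHcard : H.card ≤ p + 1 := by
        have hw : ∀ i ∈ H, ∃ g'' : Fin ((p+1)*k),
            (g'' : ℕ)/(p+1) = (g0'' : ℕ)/(p+1)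
            ∧ 0 < y i (g''.succ, (0 : Fin (p+2))) := fun i hi => (hHmem i).1 hi
        choose w hw1 hw2 using hw
        have hinj : H.card ≤ (Finset.univ.filter (fun g'' : Fin ((p+1)*k) =>
            (g'' : ℕ)/(p+1) = (g0'' : ℕ)/(p+1))).card := by
          refine Finset.card_le_card_of_injOn
            (fun i => if hi : i ∈ H then w i hi else g0) ?_ ?_
          · intro i hi
            rw [Finset.mem_coe] at hi
            simp only [dif_pos hi]
            exact Finset.mem_filter.mpr ⟨Finset.mem_univ _, hw1 i hi⟩
          · intro a ha b hb hab
            rw [Finset.mem_coe] at ha hb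
            simp only [dif_pos ha, dif_pos hb] at hab
            by_contra hne
            have hpa := hw2 a ha
            have hpb := hw2 b hb
            rw [hab] at hpa
            exact Set.disjoint_left.mp (hdisj hne) hpa hpb
        exact le_trans hinj (hclass_card _)
      obtain ⟨iun, hiun⟩ : ∃ i : Fin (p+2), i ∉ H := by
        by_contra hcon
        push_neg at hcon
        have hge : p + 2 ≤ H.card := by
          have hsub : Finset.univ ⊆ H := fun i _ => hcon i
          calc p + 2 = (Finset.univ : Finset (Fin (p+2))).card := by simp
            _ ≤ H.card := Finset.card_le_card hsub
        omega
      have hBun : B iun ⟨(g0'' : ℕ)/(p+1), hjlt⟩ = 0 := by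
        simp only [hB]
        refine Finset.sum_eq_zero fun g'' _ => ?_
        by_cases hcol : (g'' : ℕ)/(p+1) = (((⟨(g0'' : ℕ)/(p+1), hjlt⟩ : Fin k)) : ℕ)
        · rw [if_pos hcol]
          by_contra hne
          exact hiun ((hHmem iun).2 ⟨g'', hcol,
            lt_of_le_of_ne (hnn _ _) (Ne.symm hne)⟩)
        · rw [if_neg hcol]
      have hBst : y istar (g0''.succ, (0 : Fin (p+2)))
          ≤ B istar ⟨(g0'' : ℕ)/(p+1), hjlt⟩ := by
        simp only [hB]
        have hterm := Finset.single_le_sum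
          (f := fun g'' : Fin ((p+1)*k) =>
            if (g'' : ℕ)/(p+1) = (((⟨(g0'' : ℕ)/(p+1), hjlt⟩ : Fin k)) : ℕ)
            then y istar (g''.succ, (0 : Fin (p+2))) else 0)
          (fun g'' _ => by
            dsimp only
            split
            · exact hnn _ _
            · exact le_rfl)
          (Finset.mem_univ g0'')
        simpa using hterm
      have hcontr := hAB istar iun ⟨(g0'' : ℕ)/(p+1), hjlt⟩
      rw [hA0, hA0, hBun] at hcontr
      linarith
  -- conclusion
  intro i
  set T : Fin (p+2) → Finset (Fin ((p+1)*k+1) × Fin (p+2)) :=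
    fun i' => Finset.univ.filter (fun gs => 0 < y i' gs) with hT
  have hTset : ∀ i', {gs | 0 < y i' gs} = (↑(T i') : Set _) := by
    intro i'; ext gs; simp [hT]
  have hTG : ∀ i', G.card ≤ (T i').card := by
    intro i'
    have hex : ∀ g ∈ G, ∃ s, 0 < y i' (g, s) := by
      intro g hg
      obtain ⟨σ, _, h2, _⟩ := hslot g hg
      exact ⟨σ i', by rw [h2 i']; exact (hGmem g i').1 hg⟩
    choose sl hsl using hex
    refine Finset.card_le_card_of_injOn
      (fun g => if hg : g ∈ G then (g, sl g hg) else (g, (0 : Fin (p+2)))) ?_ ?_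
    · intro g hg
      rw [Finset.mem_coe] at hg
      simp only [dif_pos hg]
      exact Finset.mem_filter.mpr ⟨Finset.mem_univ _, hsl g hg⟩
    · intro a ha b hb hab
      rw [Finset.mem_coe] at ha hb
      simp only [dif_pos ha, dif_pos hb] at hab
      exact congrArg Prod.fst hab
  have hTdisj : ∀ (a b : Fin (p+2)), a ≠ b → Disjoint (T a) (T b) := by
    intro a b hne
    rw [Finset.disjoint_left]
    intro gs h1 h2
    rw [hT] at h1 h2
    simp only [Finset.mem_filter, Finset.mem_univ, true_and] at h1 h2
    exact Set.disjoint_left.mp (hdisj hne) h1 h2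
  have htot : ∑ i', (T i').card ≤ ((p+1)*k+1) * (p+2) := by
    rw [← Finset.card_biUnion (fun a _ b _ hne => hTdisj a b hne)]
    calc (Finset.univ.biUnion T).card
        ≤ (Finset.univ : Finset (Fin ((p+1)*k+1) × Fin (p+2))).card :=
          Finset.card_le_card (Finset.subset_univ _)
      _ = ((p+1)*k+1) * (p+2) := by simp
  have hge : ∀ i', (p+1)*k + 1 ≤ (T i').card := fun i' => le_trans hGcard (hTG i')
  have hcard : (T i).card = (p+1)*k + 1 := by
    by_contra hne
    have hgt : (p+1)*k + 1 < (T i).card := lt_of_le_of_ne (hge i) (Ne.symm hne)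
    have hlt : (∑ _i' : Fin (p+2), ((p+1)*k+1)) < ∑ i', (T i').card :=
      Finset.sum_lt_sum (fun i' _ => hge i') ⟨i, Finset.mem_univ i, hgt⟩
    simp only [Finset.sum_const, Finset.card_univ, Fintype.card_fin, smul_eq_mul] at hlt
    rw [mul_comm] at hlt
    omega
  rw [hTset i, Set.ncard_coe_finset, hcard]

noncomputable def st8L (p k : ℕ) :
    ((Fin ((p+1)*k+1) × Fin (p+2)) → ℝ) →ₗ[ℝ] EuclideanSpace ℝ (Fin ((p+2)*k)) where
  toFun z := WithLp.toLp 2 (fun c => ∑ gs : Fin ((p+1)*k+1) × Fin (p+2), z gs * st8val p k gs.1 gs.2 c)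
  map_add' x y := by
    ext c
    show (∑ gs, (x gs + y gs) * st8val p k gs.1 gs.2 c)
      = (∑ gs, x gs * st8val p k gs.1 gs.2 c) + ∑ gs, y gs * st8val p k gs.1 gs.2 c
    rw [← Finset.sum_add_distrib]
    exact Finset.sum_congr rfl fun gs _ => by ring
  map_smul' r x := by
    ext c
    show (∑ gs, (r * x gs) * st8val p k gs.1 gs.2 c) = r * ∑ gs, x gs * st8val p k gs.1 gs.2 c
    rw [Finset.mul_sum]
    exact Finset.sum_congr rfl fun gs _ => by ring

lemma st8L_apply (p k : ℕ) (z : (Fin ((p+1)*k+1) × Fin (p+2)) → ℝ) (c : Fin ((p+2)*k)) :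
    st8L p k z c = ∑ gs : Fin ((p+1)*k+1) × Fin (p+2), z gs * st8val p k gs.1 gs.2 c := rfl


/-- for `r ≥ 2`, `k ≥ 1`, `N = (rk+1)(r-1)`, `m = (r-1)k`, there is an
affine map `f : σ^N → ℝ^{rk}` (the restriction of an affine map on the ambient space)
all of whose `r`-Tverberg points are of type `{m}^r`: whenever `x_1,…,x_r ∈ σ^N` have
pairwise disjoint supports and equal images, each support has exactly `m+1` elements. -/
theorem statement8 (r k : ℕ) (hr : 2 ≤ r) (hk : 1 ≤ k)
    (m N : ℕ) (hm : m = (r - 1) * k) (hN : N = (r * k + 1) * (r - 1)) :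
    ∃ f : (Fin (N + 1) → ℝ) →ᵃ[ℝ] EuclideanSpace ℝ (Fin (r * k)),
      ∀ x : Fin r → (Fin (N + 1) → ℝ),
        (∀ i, x i ∈ stdSimplex ℝ (Fin (N + 1))) →
        (Pairwise fun i j => Disjoint {a | 0 < x i a} {a | 0 < x j a}) →
        (∀ i j, f (x i) = f (x j)) →
        ∀ i, {a | 0 < x i a}.ncard = m + 1 := by
  obtain ⟨p, rfl⟩ : ∃ p, r = p + 2 := ⟨r - 2, by omega⟩
  have h21 : p + 2 - 1 = p + 1 := by omega
  have hm' : m = (p+1)*k := by rw [hm, h21]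
  have hNc : ((p+1)*k+1) * (p+2) = N + 1 := by rw [hN, h21]; ring
  set eqv : (Fin ((p+1)*k+1) × Fin (p+2)) ≃ Fin (N+1) :=
    finProdFinEquiv.trans (finCongr hNc) with heqv
  refine ⟨((st8L p k).comp (LinearMap.funLeft ℝ ℝ eqv)).toAffineMap, ?_⟩
  intro x hx hdisjx hfx i
  set y : Fin (p+2) → (Fin ((p+1)*k+1) × Fin (p+2)) → ℝ :=
    fun i' gs => x i' (eqv gs) with hy
  have hkey := st8_key p k hk y
    (fun i' gs => (hx i').1 _)
    (fun i' => (Equiv.sum_comp eqv (x i')).trans (hx i').2)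
    (by
      intro a b hab
      rw [Set.disjoint_left]
      intro gs h1 h2
      exact Set.disjoint_left.mp (hdisjx hab) h1 h2)
    (by
      intro i1 i2 c
      have h := hfx i1 i2
      have h2 := congrArg (fun v : EuclideanSpace ℝ (Fin ((p+2)*k)) => v c) h
      simpa [LinearMap.coe_toAffineMap, LinearMap.comp_apply, LinearMap.funLeft_apply,
        st8L_apply, hy] using h2)
  have himg : {a | 0 < x i a} = eqv '' {gs | 0 < y i gs} := by
    ext a
    constructor
    · intro ha
      refine ⟨eqv.symm a, ?_, Equiv.apply_symm_apply eqv a⟩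
      show 0 < y i (eqv.symm a)
      rw [hy]
      simpa [Equiv.apply_symm_apply] using ha
    · rintro ⟨gs, hgs, rfl⟩
      exact hgs
  rw [himg, Set.ncard_image_of_injective _ eqv.injective, hkey i, hm']
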